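/- For every compact set K ⊂ ℂ there is a constant C > 0, depending only on K, such that for every 0 < ε ≤ 1/2 one has ∫_K |log|z − ε| − log|z|| dLeb(z) ≤ −C ε log ε. -/

import Mathlib

open MeasureTheory

open Set Metric

lemma aux_int1d {r : ℝ} (hr : 0 ≤ r) :
    IntegrableOn (fun t : ℝ => |t| ^ (-(1/2) : ℝ)) (Icc (-r) r) volume := by
  have hpos : IntegrableOn (fun t : ℝ => |t| ^ (-(1/2) : ℝ)) (Icc 0 r) volume := by
    have h := (intervalIntegral.intervalIntegrable_rpow' (a := 0) (b := r) (r := -(1/2)) (by norm_num))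
    have h2 : IntegrableOn (fun t : ℝ => t ^ (-(1/2) : ℝ)) (Icc 0 r) volume :=
      (intervalIntegrable_iff_integrableOn_Icc_of_le hr).1 h
    refine h2.congr_fun (fun t ht => ?_) measurableSet_Icc
    rw [abs_of_nonneg ht.1]
  have hneg : IntegrableOn (fun t : ℝ => |t| ^ (-(1/2) : ℝ)) (Icc (-r) 0) volume := by
    have hmp : MeasurePreserving (fun t : ℝ => -t) volume volume :=
      Measure.measurePreserving_neg volume
    have hemb : MeasurableEmbedding (fun t : ℝ => -t) :=
      (Homeomorph.neg ℝ).measurableEmbedding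
    have := (hmp.integrableOn_comp_preimage hemb
      (f := fun t : ℝ => |t| ^ (-(1/2) : ℝ)) (s := Icc 0 r)).2 hpos
    have hset : (fun t : ℝ => -t) ⁻¹' (Icc 0 r) = Icc (-r) 0 := by
      ext t; simp [neg_le, le_neg, and_comm]
    rw [hset] at this
    refine this.congr_fun (fun t _ => ?_) measurableSet_Icc
    simp [Function.comp, abs_neg]
  have : Icc (-r) r = Icc (-r) 0 ∪ Icc 0 r := by
    rw [Icc_union_Icc_eq_Icc (by linarith) hr]
  rw [this]
  exact hneg.union hpos

lemma aux_int2d {r : ℝ} (hr : 0 ≤ r)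
    (h1 : IntegrableOn (fun t : ℝ => |t| ^ (-(1/2) : ℝ)) (Icc (-r) r) volume) :
    IntegrableOn (fun p : ℝ × ℝ => |p.1| ^ (-(1/2) : ℝ) * |p.2| ^ (-(1/2) : ℝ))
      (Icc (-r) r ×ˢ Icc (-r) r) volume := by
  have := h1.mul_prod h1
  rw [IntegrableOn, Measure.volume_eq_prod, ← Measure.prod_restrict]
  exact this

lemma aux_intC {r : ℝ} (hr : 0 ≤ r)
    (h2 : IntegrableOn (fun p : ℝ × ℝ => |p.1| ^ (-(1/2) : ℝ) * |p.2| ^ (-(1/2) : ℝ))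
      (Icc (-r) r ×ˢ Icc (-r) r) volume) :
    IntegrableOn (fun z : ℂ => |z.re| ^ (-(1/2) : ℝ) * |z.im| ^ (-(1/2) : ℝ))
      (ball (0 : ℂ) r) volume := by
  have hmp := Complex.volume_preserving_equiv_real_prod
  have hemb := Complex.measurableEquivRealProd.measurableEmbedding
  have h3 := (hmp.integrableOn_comp_preimage hemb
    (f := fun p : ℝ × ℝ => |p.1| ^ (-(1/2) : ℝ) * |p.2| ^ (-(1/2) : ℝ))
    (s := Icc (-r) r ×ˢ Icc (-r) r)).2 h2
  have h4 : IntegrableOn (fun z : ℂ => |z.re| ^ (-(1/2) : ℝ) * |z.im| ^ (-(1/2) : ℝ))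
      (Complex.measurableEquivRealProd ⁻¹' (Icc (-r) r ×ˢ Icc (-r) r)) volume := h3
  refine h4.mono_set fun z hz => ?_
  have hz' : ‖z‖ < r := by simpa using mem_ball_iff_norm.1 hz
  show (z.re, z.im) ∈ Icc (-r) r ×ˢ Icc (-r) r
  rw [Set.mem_prod]
  constructor
  · exact ⟨by linarith [neg_abs_le z.re, (Complex.abs_re_le_norm z)],
      by linarith [le_abs_self z.re, (Complex.abs_re_le_norm z)]⟩
  · exact ⟨by linarith [neg_abs_le z.im, (Complex.abs_im_le_norm z)],
      by linarith [le_abs_self z.im, (Complex.abs_im_le_norm z)]⟩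

lemma aux_null_re : (volume : Measure ℂ) {z : ℂ | z.re = 0} = 0 := by
  have h : {z : ℂ | z.re = 0} =
      Complex.measurableEquivRealProd ⁻¹' ({(0:ℝ)} ×ˢ (univ : Set ℝ)) := by
    ext z; simp [Complex.measurableEquivRealProd, Complex.equivRealProd, eq_comm]
  rw [h, Complex.volume_preserving_equiv_real_prod.measure_preimage
    (((measurableSet_singleton _).prod MeasurableSet.univ).nullMeasurableSet)]
  rw [Measure.volume_eq_prod, Measure.prod_prod]
  simp

lemma aux_null_im : (volume : Measure ℂ) {z : ℂ | z.im = 0} = 0 := by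
  have h : {z : ℂ | z.im = 0} =
      Complex.measurableEquivRealProd ⁻¹' ((univ : Set ℝ) ×ˢ {(0:ℝ)}) := by
    ext z; simp [Complex.measurableEquivRealProd, Complex.equivRealProd, eq_comm]
  rw [h, Complex.volume_preserving_equiv_real_prod.measure_preimage
    ((MeasurableSet.univ.prod (measurableSet_singleton _)).nullMeasurableSet)]
  rw [Measure.volume_eq_prod, Measure.prod_prod]
  simp

lemma aux_pointwise {z : ℂ} (hre : z.re ≠ 0) (him : z.im ≠ 0) :
    ‖z‖⁻¹ ≤ |z.re| ^ (-(1/2) : ℝ) * |z.im| ^ (-(1/2) : ℝ) := by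
  set a := |z.re| with ha
  set b := |z.im| with hb
  have ha0 : 0 < a := abs_pos.2 hre
  have hb0 : 0 < b := abs_pos.2 him
  have habs : 0 < ‖z‖ := by
    simp only [norm_pos_iff]
    intro h; rw [h] at hre; simp at hre
  have key : a * b ≤ ‖z‖ ^ 2 := by
    have h2 : ‖z‖ ^ 2 = z.re ^ 2 + z.im ^ 2 := by
      rw [Complex.sq_norm, Complex.normSq_apply]; ring
    rw [h2]
    nlinarith [sq_abs z.re, sq_abs z.im, sq_nonneg (a - b), sq_nonneg (a + b)]
  have hsq : a ^ ((1:ℝ)/2) * b ^ ((1:ℝ)/2) ≤ ‖z‖ := by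
    rw [← Real.mul_rpow ha0.le hb0.le, ← Real.sqrt_eq_rpow]
    calc Real.sqrt (a * b) ≤ Real.sqrt (‖z‖ ^ 2) := Real.sqrt_le_sqrt key
      _ = ‖z‖ := Real.sqrt_sq habs.le
  have h1 : a ^ (-(1/2) : ℝ) = (a ^ ((1:ℝ)/2))⁻¹ := by
    rw [← Real.rpow_neg ha0.le]
  have h2 : b ^ (-(1/2) : ℝ) = (b ^ ((1:ℝ)/2))⁻¹ := by
    rw [← Real.rpow_neg hb0.le]
  rw [h1, h2, ← mul_inv]
  exact inv_anti₀ (by positivity) hsq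

lemma integrableOn_inv_abs_ball {r : ℝ} (hr : 0 ≤ r) :
    IntegrableOn (fun z : ℂ => ‖z‖⁻¹) (ball (0 : ℂ) r) volume := by
  have hG := aux_intC hr (aux_int2d hr (aux_int1d hr))
  refine Integrable.mono' hG ?_ ?_
  · exact (continuous_norm.measurable.inv).aestronglyMeasurable
  · have hnull : (volume : Measure ℂ) ({z : ℂ | z.re = 0} ∪ {z : ℂ | z.im = 0}) = 0 :=
      measure_union_null aux_null_re aux_null_im
    have hae : ∀ᵐ z : ℂ ∂volume, z.re ≠ 0 ∧ z.im ≠ 0 := by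
      rw [ae_iff]
      have hs : {z : ℂ | ¬(z.re ≠ 0 ∧ z.im ≠ 0)} =
          {z : ℂ | z.re = 0} ∪ {z : ℂ | z.im = 0} := by
        ext z; simp [not_and_or]; tauto
      rw [hs]; exact hnull
    filter_upwards [ae_restrict_of_ae hae] with z hz
    rw [Real.norm_eq_abs, abs_of_nonneg (inv_nonneg.2 (norm_nonneg z))]
    exact aux_pointwise hz.1 hz.2


lemma aux_log_sub {a b : ℝ} (ha : 0 < a) (hb : 0 < b) :
    |Real.log a - Real.log b| ≤ |a - b| * (a⁻¹ + b⁻¹) := by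
  have key : ∀ x y : ℝ, 0 < x → 0 < y →
      Real.log x - Real.log y ≤ |x - y| * (x⁻¹ + y⁻¹) := by
    intro x y hx hy
    have h1 : Real.log x - Real.log y = Real.log (x / y) :=
      (Real.log_div hx.ne' hy.ne').symm
    have h2 : Real.log (x / y) ≤ x / y - 1 := Real.log_le_sub_one_of_pos (div_pos hx hy)
    have h3 : x / y - 1 = (x - y) * y⁻¹ := by field_simp
    have h4 : (x - y) * y⁻¹ ≤ |x - y| * (x⁻¹ + y⁻¹) := by
      have e1 : x - y ≤ |x - y| := le_abs_self _
      have e2 : (0:ℝ) ≤ |x - y| := abs_nonneg _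
      have e3 : (0:ℝ) < y⁻¹ := inv_pos.2 hy
      have e4 : (0:ℝ) < x⁻¹ := inv_pos.2 hx
      nlinarith
    linarith [h1 ▸ (h2.trans_eq h3) |>.trans h4]
  rw [abs_sub_le_iff]
  refine ⟨key a b ha hb, ?_⟩
  have := key b a hb ha
  rwa [abs_sub_comm, add_comm] at this

/-- **Step 1, inner estimate (Lemma 2.2)**: for every compact set `K ⊂ ℂ` there is a
constant `C > 0`, depending only on `K`, such that for every `0 < ε ≤ 1/2` one has
`∫_K |log|z − ε| − log|z|| dLeb(z) ≤ −C ε log ε`. -/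
theorem integral_log_translate_estimate (K : Set ℂ) (hK : IsCompact K) :
    ∃ C : ℝ, 0 < C ∧
      ∀ ε : ℝ, 0 < ε → ε ≤ 1 / 2 →
        (∫ z in K, |Real.log ‖z - (ε : ℂ)‖ - Real.log ‖z‖|) ≤
          C * (ε * (-Real.log ε)) := by
  obtain ⟨R, hR⟩ := hK.isBounded.subset_closedBall 0
  set r : ℝ := |R| + 1 with hr_def
  have hr0 : 0 ≤ r := by positivity
  set C₀ : ℝ := ∫ z in ball (0:ℂ) r, ‖z‖⁻¹ with hC₀_def
  have hC₀ : 0 ≤ C₀ :=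
    setIntegral_nonneg measurableSet_ball fun z _ => inv_nonneg.2 (norm_nonneg z)
  have hl2 : (0:ℝ) < Real.log 2 := Real.log_pos (by norm_num)
  refine ⟨(2 * C₀ + 1) / Real.log 2, by positivity, fun ε hε0 hε2 => ?_⟩
  have hKsub : K ⊆ ball (0:ℂ) r := by
    intro z hz
    have h1 : ‖z‖ ≤ R := by simpa using mem_closedBall_iff_norm.1 (hR hz)
    refine mem_ball_iff_norm.2 ?_
    rw [sub_zero, hr_def]
    linarith [le_abs_self R]
  have hIball := integrableOn_inv_abs_ball hr0
  -- integrability of 1/|z| on K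
  have hI1 : IntegrableOn (fun z : ℂ => ‖z‖⁻¹) K volume :=
    hIball.mono_set hKsub
  -- translation
  set T : ℂ → ℂ := fun w => w + (ε:ℂ) with hT_def
  have hmp : MeasurePreserving T volume volume := measurePreserving_add_right volume (ε:ℂ)
  have hemb : MeasurableEmbedding T := (Homeomorph.addRight (ε:ℂ)).measurableEmbedding
  have hTsub : T ⁻¹' K ⊆ ball (0:ℂ) r := by
    intro w hw
    have h1 : ‖w + ε‖ ≤ R := by
      have := mem_closedBall_iff_norm.1 (hR hw)
      simpa using this
    have h2 : ‖w‖ ≤ ‖w + ε‖ + ‖(ε:ℂ)‖ := by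
      calc ‖w‖ = ‖(w + ε) + (-(ε:ℂ))‖ := by rw [add_neg_cancel_right]
        _ ≤ ‖w + ε‖ + ‖-(ε:ℂ)‖ := norm_add_le _ _
        _ = ‖w + ε‖ + ‖(ε:ℂ)‖ := by rw [norm_neg]
    have h3 : ‖(ε:ℂ)‖ = ε := by rw [Complex.norm_real, Real.norm_eq_abs, abs_of_pos hε0]
    have h4 : ‖w‖ < r := by
      rw [hr_def]; rw [h3] at h2
      linarith [le_abs_self R]
    refine mem_ball_iff_norm.2 ?_
    rw [sub_zero]
    exact h4
  have hI2 : IntegrableOn (fun z : ℂ => (‖z - ε‖)⁻¹) K volume := by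
    rw [← hmp.integrableOn_comp_preimage hemb]
    have : ((fun z : ℂ => (‖z - ε‖)⁻¹) ∘ T) = fun w : ℂ => ‖w‖⁻¹ := by
      funext w; simp [hT_def, Function.comp]
    rw [this]
    exact hIball.mono_set hTsub
  -- bound each integral by C₀
  have hnn : 0 ≤ᵐ[volume.restrict (ball (0:ℂ) r)] fun z : ℂ => ‖z‖⁻¹ :=
    Filter.Eventually.of_forall fun z => inv_nonneg.2 (norm_nonneg z)
  have hB1 : (∫ z in K, ‖z‖⁻¹) ≤ C₀ :=
    setIntegral_mono_set hIball hnn (HasSubset.Subset.eventuallyLE hKsub)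
  have hB2 : (∫ z in K, (‖z - ε‖)⁻¹) ≤ C₀ := by
    have heq : (∫ z in K, (‖z - ε‖)⁻¹)
        = ∫ w in T ⁻¹' K, ‖w‖⁻¹ := by
      rw [← hmp.setIntegral_preimage_emb hemb (fun y : ℂ => (‖y - ε‖)⁻¹) K]
      refine setIntegral_congr_fun (hK.isClosed.measurableSet.preimage hmp.measurable)
        fun w _ => ?_
      simp [hT_def]
    rw [heq]
    exact setIntegral_mono_set hIball hnn (HasSubset.Subset.eventuallyLE hTsub)
  -- a.e. pointwise bound
  have hg_int : IntegrableOn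
      (fun z : ℂ => ε * (‖z‖⁻¹ + (‖z - ε‖)⁻¹)) K volume :=
    (hI1.add hI2).const_mul ε
  have hae : ∀ᵐ z : ℂ ∂volume, z ≠ 0 ∧ z ≠ (ε:ℂ) := by
    have h0 : (volume : Measure ℂ) ({(0:ℂ)} ∪ {(ε:ℂ)}) = 0 :=
      measure_union_null (measure_singleton _) (measure_singleton _)
    rw [ae_iff]
    have hs : {z : ℂ | ¬(z ≠ 0 ∧ z ≠ (ε:ℂ))} = ({(0:ℂ)} ∪ {(ε:ℂ)}) := by
      ext z; simp [not_and_or]; tauto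
    rw [hs]; exact h0
  have hptwise : ∀ᵐ z : ℂ ∂volume.restrict K,
      |Real.log (‖z - (ε : ℂ)‖) - Real.log ‖z‖| ≤
        ε * (‖z‖⁻¹ + (‖z - ε‖)⁻¹) := by
    filter_upwards [ae_restrict_of_ae hae] with z hz
    have hb : 0 < ‖z‖ := norm_pos_iff.2 hz.1
    have ha : 0 < ‖z - ε‖ := norm_pos_iff.2 (sub_ne_zero.2 hz.2)
    have h1 := aux_log_sub ha hb
    have h2 : |‖z - ε‖ - ‖z‖| ≤ ε := by
      have := abs_norm_sub_norm_le (z - ε) z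
      simpa [abs_of_pos hε0] using this
    calc |Real.log (‖z - (ε : ℂ)‖) - Real.log ‖z‖|
        ≤ |‖z - ε‖ - ‖z‖|
          * ((‖z - ε‖)⁻¹ + ‖z‖⁻¹) := h1
      _ ≤ ε * ((‖z - ε‖)⁻¹ + ‖z‖⁻¹) := by
          apply mul_le_mul_of_nonneg_right h2; positivity
      _ = ε * (‖z‖⁻¹ + (‖z - ε‖)⁻¹) := by ring
  -- put it together
  have hmain : (∫ z in K, |Real.log (‖z - (ε : ℂ)‖) - Real.log ‖z‖|)
      ≤ ε * (2 * C₀) := by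
    calc (∫ z in K, |Real.log (‖z - (ε : ℂ)‖) - Real.log ‖z‖|)
        ≤ ∫ z in K, ε * (‖z‖⁻¹ + (‖z - ε‖)⁻¹) :=
          integral_mono_of_nonneg (Filter.Eventually.of_forall fun z => abs_nonneg _)
            hg_int hptwise
      _ = ε * ((∫ z in K, ‖z‖⁻¹) + ∫ z in K, (‖z - ε‖)⁻¹) := by
          rw [integral_const_mul, integral_add hI1 hI2]
      _ ≤ ε * (C₀ + C₀) := by
          apply mul_le_mul_of_nonneg_left (add_le_add hB1 hB2) hε0.le
      _ = ε * (2 * C₀) := by ring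
  refine hmain.trans ?_
  have hlog : Real.log 2 ≤ -Real.log ε := by
    have : Real.log ε ≤ Real.log (1/2) := Real.log_le_log hε0 hε2
    rw [one_div, Real.log_inv] at this
    linarith
  have hcan : (2 * C₀ + 1) / Real.log 2 * Real.log 2 = 2 * C₀ + 1 :=
    div_mul_cancel₀ _ hl2.ne'
  have h5 : (2 * C₀ + 1) / Real.log 2 * (ε * Real.log 2)
      ≤ (2 * C₀ + 1) / Real.log 2 * (ε * (-Real.log ε)) := by
    apply mul_le_mul_of_nonneg_left _ (by positivity)
    exact mul_le_mul_of_nonneg_left hlog hε0.le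
  nlinarith [h5, hcan, hε0.le, hC₀]
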